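/- Let q > 2 be a prime power and let s, t be natural numbers with t ≥ 1 and gcd(s,t) = 1. Then there exist a, b, c, d, all nonzero elements of 𝔽_q, such that the polynomial f(x,y,z) = a + b·x + c·z + d·x^s·y^t·z satisfies Z(f) = q·gcd(t, q−1) + (q−1)(q−3). -/

import Mathlib

/-- `Zf f` is the number of points `(x,y,z) ∈ (Fˣ)³` with `f (x,y,z) = 0`. -/
noncomputable def Zf {F : Type} [Field F] [Fintype F]
    (f : Fˣ × Fˣ × Fˣ → F) : ℕ :=
  Nat.card {v : Fˣ × Fˣ × Fˣ // f v = 0}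

/-- The polynomial `a + b·x + c·z + d·x^s·y^t·z` from `T(s,t)`,
evaluated at `(x,y,z) = (v.1, v.2.1, v.2.2) ∈ (Fˣ)³`. -/
def fT {F : Type} [Field F] (s t : ℕ) (a b c d : F)
    (v : Fˣ × Fˣ × Fˣ) : F :=
  a + b * (v.1 : F) + c * (v.2.2 : F) +
    d * (v.1 : F) ^ s * (v.2.1 : F) ^ t * (v.2.2 : F)

section Aux

set_option linter.unusedSectionVars false

open Finset

variable {F : Type} [Field F] [Fintype F]

def phiST (F : Type) [Field F] (s t : ℕ) : Fˣ × Fˣ →* Fˣ where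
  toFun p := p.1 ^ s * p.2 ^ t
  map_one' := by simp
  map_mul' p q := by simp [mul_pow, mul_mul_mul_comm]

lemma phiST_surj (s t : ℕ) (hst : Nat.gcd s t = 1) :
    Function.Surjective (phiST F s t) := by
  intro e
  have hb := Nat.gcd_eq_gcd_ab s t
  rw [hst] at hb
  refine ⟨(e ^ Nat.gcdA s t, e ^ Nat.gcdB s t), ?_⟩
  show (e ^ Nat.gcdA s t) ^ s * (e ^ Nat.gcdB s t) ^ t = e
  have hexp : Nat.gcdA s t * (s : ℤ) + Nat.gcdB s t * (t : ℤ) = 1 := by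
    push_cast at hb; linear_combination hb.symm
  rw [← zpow_natCast (e ^ Nat.gcdA s t) s, ← zpow_natCast (e ^ Nat.gcdB s t) t,
    ← zpow_mul, ← zpow_mul, ← zpow_add, hexp, zpow_one]

lemma card_ker_phiST (s t : ℕ) (hst : Nat.gcd s t = 1) :
    Nat.card (phiST F s t).ker = Nat.card Fˣ := by
  have h1 := Subgroup.card_eq_card_quotient_mul_card_subgroup (phiST F s t).ker
  have h2 : Nat.card ((Fˣ × Fˣ) ⧸ (phiST F s t).ker) = Nat.card Fˣ :=
    Nat.card_congr (QuotientGroup.quotientKerEquivOfSurjective _ (phiST_surj s t hst)).toEquiv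
  rw [h2, Nat.card_prod] at h1
  have hpos : 0 < Nat.card Fˣ := Nat.card_pos
  exact (Nat.eq_of_mul_eq_mul_left hpos h1).symm

lemma fiber_card (s t : ℕ) (hst : Nat.gcd s t = 1) (ε : Fˣ) :
    Nat.card {p : Fˣ × Fˣ // p.1 ^ s * p.2 ^ t = ε} = Nat.card Fˣ := by
  obtain ⟨p₀, hp₀⟩ := phiST_surj (F := F) s t hst ε
  have e : {p : Fˣ × Fˣ // p.1 ^ s * p.2 ^ t = ε} ≃ (phiST F s t).ker :=
    { toFun := fun p => ⟨p.1 * p₀⁻¹, by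
        have h2 : phiST F s t p.1 = ε := p.2
        simp [MonoidHom.mem_ker, map_mul, h2, hp₀]⟩
      invFun := fun p => ⟨p.1 * p₀, by
        have h2 : phiST F s t p.1 = 1 := p.2
        show phiST F s t (p.1 * p₀) = ε
        rw [map_mul, h2, one_mul, hp₀]⟩
      left_inv := fun p => by ext <;> simp
      right_inv := fun p => by ext <;> simp }
  rw [Nat.card_congr e, card_ker_phiST s t hst]

lemma cardB (t : ℕ) (ht : 1 ≤ t) :
    Nat.card {y : Fˣ // y ^ t = 1} = Nat.gcd t (Fintype.card F - 1) := by
  classical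
  have hcard : Fintype.card Fˣ = Fintype.card F - 1 := by
    rw [← Nat.card_eq_fintype_card, Nat.card_units, Nat.card_eq_fintype_card]
  have hdvd : Nat.gcd t (Fintype.card Fˣ) ∣ Fintype.card Fˣ := Nat.gcd_dvd_right _ _
  have hnpos : 0 < Fintype.card Fˣ := Fintype.card_pos
  have hmpos : 0 < Nat.gcd t (Fintype.card Fˣ) := Nat.gcd_pos_of_pos_left _ ht
  obtain ⟨g, hg⟩ := IsCyclic.exists_generator (α := Fˣ)
  have hog : orderOf g = Fintype.card Fˣ := by
    rw [orderOf_eq_card_of_forall_mem_zpowers hg, Nat.card_eq_fintype_card]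
  have hoz : orderOf (g ^ (Fintype.card Fˣ / Nat.gcd t (Fintype.card Fˣ))) =
      Nat.gcd t (Fintype.card Fˣ) := by
    rw [orderOf_pow, hog, Nat.gcd_eq_right (Nat.div_dvd_of_dvd hdvd),
      Nat.div_div_self hdvd hnpos.ne']
  have hp := IsPrimitiveRoot.orderOf (g ^ (Fintype.card Fˣ / Nat.gcd t (Fintype.card Fˣ)))
  rw [hoz] at hp
  haveI : NeZero (Nat.gcd t (Fintype.card Fˣ)) := ⟨hmpos.ne'⟩
  have hcardm := hp.card_rootsOfUnity'
  have he : Nat.card {y : Fˣ // y ^ t = 1} =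
      Fintype.card (rootsOfUnity (Nat.gcd t (Fintype.card Fˣ)) F) := by
    rw [Nat.card_eq_fintype_card]
    refine Fintype.card_congr (Equiv.subtypeEquivRight fun y => ?_)
    rw [mem_rootsOfUnity, ← orderOf_dvd_iff_pow_eq_one, ← orderOf_dvd_iff_pow_eq_one, Nat.dvd_gcd_iff]
    exact ⟨fun h => ⟨h, Nat.card_eq_fintype_card (α := Fˣ) ▸ orderOf_dvd_natCard y⟩, fun h => h.1⟩
  rw [he, ← Nat.card_eq_fintype_card, hcardm, hcard]

end Aux

set_option maxHeartbeats 1000000 in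
/-- There exist `a, b, c, d`, all nonzero, with
`Z(f) = q·gcd(t, q−1) + (q−1)(q−3)`. -/
theorem stmt3 (F : Type) [Field F] [Fintype F] (s t : ℕ)
    (hq : 2 < Fintype.card F) (ht : 1 ≤ t) (hst : Nat.gcd s t = 1) :
    ∃ a b c d : F, a ≠ 0 ∧ b ≠ 0 ∧ c ≠ 0 ∧ d ≠ 0 ∧
      Zf (fT s t a b c d) =
        Fintype.card F * Nat.gcd t (Fintype.card F - 1) +
          (Fintype.card F - 1) * (Fintype.card F - 3) := by
  classical
  set q := Fintype.card F with hqdef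
  have hcu : Fintype.card Fˣ = q - 1 := by
    rw [← Nat.card_eq_fintype_card, Nat.card_units, Nat.card_eq_fintype_card]
  set d : F := -(-1 : F) ^ s with hd
  have hd0 : d ≠ 0 := by
    simp [hd]
  refine ⟨1, 1, 1, d, one_ne_zero, one_ne_zero, one_ne_zero, hd0, ?_⟩
  -- notation
  set ε : Fˣ := (-1 : Fˣ) ^ s with hε
  -- the inner count over z
  set n : Fˣ → Fˣ → ℕ := fun x y =>
    ∑ z : Fˣ, if fT s t 1 1 1 d (x, y, z) = 0 then 1 else 0 with hn
  have hfT : ∀ x y z : Fˣ, fT s t 1 1 1 d (x, y, z) =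
      (1 + (x : F)) + (z : F) * (1 + d * (x : F) ^ s * (y : F) ^ t) := by
    intro x y z; simp only [fT]; ring
  have hds : d * (-1 : F) ^ s = -1 := by
    rw [hd, neg_mul, ← pow_add, ← two_mul, pow_mul, neg_one_sq, one_pow]
  have hkey : ∀ x y : Fˣ, n x y =
      if (x : F) = -1 then (if y ^ t = 1 then q - 1 else 0)
      else (if x ^ s * y ^ t = ε then 0 else 1) := by
    intro x y
    by_cases hx : (x : F) = -1
    · rw [if_pos hx]
      by_cases hy : y ^ t = 1
      · rw [if_pos hy]
        have hyF : (y : F) ^ t = 1 := by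
          rw [← Units.val_pow_eq_pow_val, hy, Units.val_one]
        have hall : ∀ z : Fˣ, fT s t 1 1 1 d (x, y, z) = 0 := by
          intro z
          rw [hfT, hx, hds, hyF]
          ring
        simp only [hn, hall, if_true, Finset.sum_const, Finset.card_univ, smul_eq_mul,
          mul_one, hcu]
      · rw [if_neg hy]
        have hyF : (y : F) ^ t ≠ 1 := by
          rw [← Units.val_pow_eq_pow_val]
          exact fun h => hy (Units.ext h)
        have hnone : ∀ z : Fˣ, fT s t 1 1 1 d (x, y, z) ≠ 0 := by
          intro z hz
          rw [hfT, hx, hds] at hz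
          have h1 : (z : F) * (1 - (y : F) ^ t) = 0 := by linear_combination hz
          rcases mul_eq_zero.1 h1 with h | h
          · exact z.ne_zero h
          · rw [sub_eq_zero] at h; exact hyF h.symm
        simp only [hn, hnone, if_false, Finset.sum_const_zero]
    · rw [if_neg hx]
      have hx1 : (1 : F) + (x : F) ≠ 0 := by
        intro h
        apply hx
        linear_combination h
      by_cases hk : x ^ s * y ^ t = ε
      · rw [if_pos hk]
        have hval : (x : F) ^ s * (y : F) ^ t = (-1 : F) ^ s := by
          have : ((x ^ s * y ^ t : Fˣ) : F) = ((ε : Fˣ) : F) := by rw [hk]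
          push_cast [hε] at this
          exact this
        have hkF : 1 + d * (x : F) ^ s * (y : F) ^ t = 0 := by
          linear_combination d * hval + hds
        have hnone : ∀ z : Fˣ, fT s t 1 1 1 d (x, y, z) ≠ 0 := by
          intro z hz
          rw [hfT, hkF, mul_zero, add_zero] at hz
          exact hx1 hz
        simp only [hn, hnone, if_false, Finset.sum_const_zero]
      · rw [if_neg hk]
        have hkF : 1 + d * (x : F) ^ s * (y : F) ^ t ≠ 0 := by
          intro h
          apply hk
          have hval : (x : F) ^ s * (y : F) ^ t = (-1 : F) ^ s := by
            linear_combination (-(-1 : F) ^ s) * h + ((x : F) ^ s * (y : F) ^ t) * hds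
          apply Units.ext
          push_cast [hε]
          exact hval
        set w : F := -(1 + (x : F)) * (1 + d * (x : F) ^ s * (y : F) ^ t)⁻¹ with hw
        have hw0 : w ≠ 0 := by
          rw [hw]
          exact mul_ne_zero (neg_ne_zero.2 hx1) (inv_ne_zero hkF)
        have hcond : ∀ z : Fˣ, (fT s t 1 1 1 d (x, y, z) = 0) ↔ z = Units.mk0 w hw0 := by
          intro z
          rw [hfT]
          constructor
          · intro h
            apply Units.ext
            rw [Units.val_mk0, hw]
            field_simp
            linear_combination h
          · intro h
            rw [h, Units.val_mk0, hw]
            field_simp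
            ring
        simp only [hn, hcond]
        rw [Finset.sum_ite_eq' Finset.univ (Units.mk0 w hw0) (fun _ => 1)]
        simp
  -- Z as a double sum
  have hZ : Zf (fT s t 1 1 1 d) = ∑ x : Fˣ, ∑ y : Fˣ, n x y := by
    rw [Zf, Nat.card_eq_fintype_card, Fintype.card_subtype, Finset.card_filter,
      Fintype.sum_prod_type]
    refine Finset.sum_congr rfl fun x _ => ?_
    rw [Fintype.sum_prod_type]
  set N : ℕ := ∑ y : Fˣ, if y ^ t = 1 then 1 else 0 with hNdef
  have hNval : N = Nat.gcd t (q - 1) := by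
    rw [hNdef, ← Finset.card_filter, ← Fintype.card_subtype, ← Nat.card_eq_fintype_card]
    exact cardB t ht
  set m : Fˣ → ℕ := fun x => ∑ y : Fˣ, if x ^ s * y ^ t = ε then 1 else 0 with hmdef
  have hm1 : ((-1 : Fˣ) : F) = -1 := by simp
  have hS1 : ∑ y : Fˣ, n (-1) y = (q - 1) * N := by
    rw [hNdef, Finset.mul_sum]
    refine Finset.sum_congr rfl fun y _ => ?_
    rw [hkey, if_pos hm1]
    split <;> simp
  have hgm : ∀ x : Fˣ, x ≠ -1 → (∑ y : Fˣ, n x y) + m x = q - 1 := by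
    intro x hx
    have hxF : (x : F) ≠ -1 := fun h => hx (Units.ext (by rw [h, hm1]))
    rw [hmdef, ← Finset.sum_add_distrib]
    have : ∀ y : Fˣ, n x y + (if x ^ s * y ^ t = ε then 1 else 0) = 1 := by
      intro y
      rw [hkey, if_neg hxF]
      split <;> simp
    simp only [this, Finset.sum_const, Finset.card_univ, smul_eq_mul, mul_one, hcu]
  have hmN : m (-1) = N := by
    rw [hmdef, hNdef]
    refine Finset.sum_congr rfl fun y _ => ?_
    congr 1
    rw [hε]
    simp only [eq_iff_iff]
    exact mul_eq_left
  have hmtot : ∑ x : Fˣ, m x = q - 1 := by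
    have h1 : ∑ x : Fˣ, m x = ∑ p : Fˣ × Fˣ, if p.1 ^ s * p.2 ^ t = ε then 1 else 0 := by
      rw [Fintype.sum_prod_type]
    rw [h1, ← Finset.card_filter, ← Fintype.card_subtype, ← Nat.card_eq_fintype_card,
      fiber_card s t hst ε, Nat.card_eq_fintype_card, hcu]
  -- split the x-sum
  rw [hZ, ← Finset.add_sum_erase Finset.univ _ (Finset.mem_univ (-1 : Fˣ)), hS1]
  set T : ℕ := ∑ x ∈ Finset.univ.erase (-1 : Fˣ), ∑ y : Fˣ, n x y with hT
  set M : ℕ := ∑ x ∈ Finset.univ.erase (-1 : Fˣ), m x with hM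
  have hTM : T + M = (q - 2) * (q - 1) := by
    rw [hT, hM, ← Finset.sum_add_distrib]
    have : ∀ x ∈ Finset.univ.erase (-1 : Fˣ), (∑ y : Fˣ, n x y) + m x = q - 1 :=
      fun x hx => hgm x (Finset.ne_of_mem_erase hx)
    rw [Finset.sum_congr rfl this, Finset.sum_const, smul_eq_mul,
      Finset.card_erase_of_mem (Finset.mem_univ _), Finset.card_univ, hcu]
    have h12 : q - 1 - 1 = q - 2 := by omega
    rw [h12]
  have hMN : M + N = q - 1 := by
    rw [hM, ← hmN, ← hmtot, ← Finset.add_sum_erase Finset.univ m (Finset.mem_univ (-1 : Fˣ))]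
    ring
  rw [← hNval]
  have h1 : 1 ≤ q := by omega
  have h2 : 2 ≤ q := by omega
  have h3 : 3 ≤ q := by omega
  zify [h1, h2, h3] at hTM hMN ⊢
  linear_combination hTM - hMN
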